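/- The first derivative of f(t) = Σ_{r=1}^{2} α_r Q_r'(t) log(Q_r(t)/Q_s(t)) equals 2·Σ_{l=1}^2 α_l log(Q_l(t)/Q_s(t)) + α_1 α_2 (Q_1'(t) Q_2(t) − Q_2'(t) Q_1(t))^2 / (Q_s(t) Q_1(t) Q_2(t)), where Q_s = α_1 Q_1 + α_2 Q_2. -/

import Mathlib

/-- The first derivative of `f(t) = Σ_r α_r Q_r'(t) log (Q_r(t)/Q_s(t))` equals
`2 Σ_l α_l log (Q_l(t)/Q_s(t)) + α₁ α₂ (Q₁' Q₂ − Q₂' Q₁)^2 / (Q_s Q₁ Q₂)`,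
where `Q_s = α₁ Q₁ + α₂ Q₂`. -/
theorem stmt_2 (α₁ α₂ ξ₁ ξ₂ η₁ η₂ : ℝ)
    (hα₁ : α₁ ∈ Set.Ioo (0 : ℝ) 1) (hα₂ : α₂ ∈ Set.Ioo (0 : ℝ) 1) (hsum : α₁ + α₂ = 1)
    (h₁ : ξ₁ ^ 2 < η₁) (h₂ : ξ₂ ^ 2 < η₂)
    (Q₁ Q₂ Qs f : ℝ → ℝ)
    (hQ₁ : ∀ t, Q₁ t = t ^ 2 + 2 * t * ξ₁ + η₁)
    (hQ₂ : ∀ t, Q₂ t = t ^ 2 + 2 * t * ξ₂ + η₂)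
    (hQs : ∀ t, Qs t = α₁ * Q₁ t + α₂ * Q₂ t)
    (hf : ∀ t, f t = α₁ * (2 * (t + ξ₁)) * Real.log (Q₁ t / Qs t)
        + α₂ * (2 * (t + ξ₂)) * Real.log (Q₂ t / Qs t)) (t : ℝ) :
    HasDerivAt f
      (2 * (α₁ * Real.log (Q₁ t / Qs t) + α₂ * Real.log (Q₂ t / Qs t))
        + α₁ * α₂ * (2 * (t + ξ₁) * Q₂ t - 2 * (t + ξ₂) * Q₁ t) ^ 2
            / (Qs t * Q₁ t * Q₂ t)) t := by
  obtain ⟨ha1, ha1'⟩ := hα₁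
  obtain ⟨ha2, ha2'⟩ := hα₂
  have hQ1pos : ∀ s, 0 < Q₁ s := fun s => by
    rw [hQ₁]; nlinarith [sq_nonneg (s + ξ₁)]
  have hQ2pos : ∀ s, 0 < Q₂ s := fun s => by
    rw [hQ₂]; nlinarith [sq_nonneg (s + ξ₂)]
  have hQspos : ∀ s, 0 < Qs s := fun s => by
    rw [hQs]; exact add_pos (mul_pos ha1 (hQ1pos s)) (mul_pos ha2 (hQ2pos s))
  -- rewrite f using log of quotient
  have hfeq : ∀ s, f s = α₁ * (2 * (s + ξ₁)) * (Real.log (Q₁ s) - Real.log (Qs s))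
      + α₂ * (2 * (s + ξ₂)) * (Real.log (Q₂ s) - Real.log (Qs s)) := fun s => by
    rw [hf, Real.log_div (hQ1pos s).ne' (hQspos s).ne',
      Real.log_div (hQ2pos s).ne' (hQspos s).ne']
  have hQ1eq : Q₁ = fun s => s ^ 2 + 2 * s * ξ₁ + η₁ := funext hQ₁
  have hQ2eq : Q₂ = fun s => s ^ 2 + 2 * s * ξ₂ + η₂ := funext hQ₂
  have hQseq : Qs = fun s => α₁ * Q₁ s + α₂ * Q₂ s := funext hQs
  have hD1 : HasDerivAt Q₁ (2 * (t + ξ₁)) t := by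
    rw [hQ1eq]
    have : HasDerivAt (fun s : ℝ => s ^ 2 + 2 * s * ξ₁ + η₁) (2 * t + 2 * ξ₁) t := by
      have h := (((hasDerivAt_pow 2 t).add
        (((hasDerivAt_id t).const_mul 2).mul_const ξ₁)).add_const η₁)
      exact h.congr_deriv (by rw [show (2:ℕ) - 1 = 1 from rfl]; push_cast; ring)
    convert this using 1; ring
  have hD2 : HasDerivAt Q₂ (2 * (t + ξ₂)) t := by
    rw [hQ2eq]
    have h := (((hasDerivAt_pow 2 t).add
      (((hasDerivAt_id t).const_mul 2).mul_const ξ₂)).add_const η₂)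
    exact h.congr_deriv (by rw [show (2:ℕ) - 1 = 1 from rfl]; push_cast; ring)
  have hDs : HasDerivAt Qs (α₁ * (2 * (t + ξ₁)) + α₂ * (2 * (t + ξ₂))) t := by
    rw [hQseq]
    exact (hD1.const_mul α₁).add (hD2.const_mul α₂)
  have hL1 : HasDerivAt (fun s => Real.log (Q₁ s)) (2 * (t + ξ₁) / Q₁ t) t :=
    hD1.log (hQ1pos t).ne'
  have hL2 : HasDerivAt (fun s => Real.log (Q₂ s)) (2 * (t + ξ₂) / Q₂ t) t :=
    hD2.log (hQ2pos t).ne'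
  have hLs : HasDerivAt (fun s => Real.log (Qs s))
      ((α₁ * (2 * (t + ξ₁)) + α₂ * (2 * (t + ξ₂))) / Qs t) t :=
    hDs.log (hQspos t).ne'
  have hlin1 : HasDerivAt (fun s : ℝ => α₁ * (2 * (s + ξ₁))) (α₁ * 2) t := by
    have := ((hasDerivAt_id t).add_const ξ₁).const_mul 2 |>.const_mul α₁
    exact this.congr_deriv (by ring)
  have hlin2 : HasDerivAt (fun s : ℝ => α₂ * (2 * (s + ξ₂))) (α₂ * 2) t := by
    have := ((hasDerivAt_id t).add_const ξ₂).const_mul 2 |>.const_mul α₂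
    exact this.congr_deriv (by ring)
  have hDf : HasDerivAt f
      (α₁ * 2 * (Real.log (Q₁ t) - Real.log (Qs t))
        + α₁ * (2 * (t + ξ₁)) * (2 * (t + ξ₁) / Q₁ t
            - (α₁ * (2 * (t + ξ₁)) + α₂ * (2 * (t + ξ₂))) / Qs t)
        + (α₂ * 2 * (Real.log (Q₂ t) - Real.log (Qs t))
        + α₂ * (2 * (t + ξ₂)) * (2 * (t + ξ₂) / Q₂ t
            - (α₁ * (2 * (t + ξ₁)) + α₂ * (2 * (t + ξ₂))) / Qs t))) t := by
    have h := (hlin1.mul (hL1.sub hLs)).add (hlin2.mul (hL2.sub hLs))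
    exact h.congr_of_eventuallyEq (Filter.Eventually.of_forall fun s => (hfeq s))
  convert hDf using 1
  rw [Real.log_div (hQ1pos t).ne' (hQspos t).ne',
    Real.log_div (hQ2pos t).ne' (hQspos t).ne', hQs t]
  have ha2eq : α₂ = 1 - α₁ := by linarith
  subst ha2eq
  have p1 := (hQ1pos t).ne'
  have p2 := (hQ2pos t).ne'
  have ps := (hQspos t).ne'
  rw [hQs t] at ps
  field_simp
  ring
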